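/- Suppose z₁,…,z₆ : ℝ → ℂ³ are differentiable functions satisfying at t = 0 the constraints ω(z₂,z₃) = ω(z₁,z₃) = ω(z₁,z₂) = 0, ω(z₁,z₅) + ω(z₂,z₅) − ω(z₃,z₄) = 0, −ω(z₁,z₄) + ω(z₂,z₄) + ω(z₃,z₅) = 0, ω(z₄,z₅) = 0, and satisfying for all t ∈ ℝ the evolution equations dz₁/dt = 2 z₂×z₃, dz₂/dt = 2 z₁×z₃, dz₃/dt = −2 z₁×z₂, dz₄/dt = z₁×z₅ + z₂×z₅ − z₃×z₄, dz₅/dt = −z₁×z₄ + z₂×z₄ + z₃×z₅, dz₆/dt = z₄×z₅. Define Φ : ℝ³ → ℂ³ by Φ(y₁,y₂,t) = ½(y₁²+y₂²)z₁(t) + ½(y₁²−y₂²)z₂(t) + y₁y₂ z₃(t) + y₁ z₄(t) + y₂ z₅(t) + z₆(t). Then at every point of ℝ³ one has ω(∂Φ/∂y₁, ∂Φ/∂y₂) = ω(∂Φ/∂y₁, ∂Φ/∂t) = ω(∂Φ/∂y₂, ∂Φ/∂t) = 0 and (∂Φ/∂y₁) × (∂Φ/∂y₂) = ∂Φ/∂t.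 -/

import Mathlib

noncomputable section

open Complex ComplexConjugate

/-- ℂ³ as triples of complex numbers. -/
abbrev C3 := ℂ × ℂ × ℂ

/-- The standard Kähler form ω(u,v) = Σ Im(conj(u_j)·v_j). -/
def omega3 (u v : C3) : ℝ :=
  (conj u.1 * v.1).im + (conj u.2.1 * v.2.1).im + (conj u.2.2 * v.2.2).im

/-- The antibilinear cross product on ℂ³. -/
def cross3 (u v : C3) : C3 :=
  ((1/2 : ℂ) * conj (u.2.1 * v.2.2 - u.2.2 * v.2.1),
   (1/2 : ℂ) * conj (u.2.2 * v.1 - u.1 * v.2.2),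
   (1/2 : ℂ) * conj (u.1 * v.2.1 - u.2.1 * v.1))

/-- The map Φ(y₁,y₂,t) = ½(y₁²+y₂²)z₁(t) + ½(y₁²−y₂²)z₂(t) + y₁y₂ z₃(t)
    + y₁ z₄(t) + y₂ z₅(t) + z₆(t). -/
def PhiMap (z₁ z₂ z₃ z₄ z₅ z₆ : ℝ → C3) (y₁ y₂ t : ℝ) : C3 :=
  ((1/2 : ℝ) * (y₁^2 + y₂^2)) • z₁ t + ((1/2 : ℝ) * (y₁^2 - y₂^2)) • z₂ t
  + (y₁ * y₂) • z₃ t + y₁ • z₄ t + y₂ • z₅ t + z₆ t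

/- ### Auxiliary algebraic lemmas -/

lemma omega3_cross_self_left (a b : C3) : omega3 a (cross3 a b) = 0 := by
  have h2r : ((1/2:ℂ)).re = 1/2 := by norm_num
  have h2i : ((1/2:ℂ)).im = 0 := by norm_num
  simp [omega3, cross3, h2r, h2i, Complex.add_re, Complex.add_im, Complex.sub_re,
    Complex.sub_im, Complex.mul_re, Complex.mul_im, Complex.conj_re, Complex.conj_im]
  ring

lemma omega3_cross_self_right (a b : C3) : omega3 b (cross3 a b) = 0 := by
  have h2r : ((1/2:ℂ)).re = 1/2 := by norm_num
  have h2i : ((1/2:ℂ)).im = 0 := by norm_num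
  simp [omega3, cross3, h2r, h2i, Complex.add_re, Complex.add_im, Complex.sub_re,
    Complex.sub_im, Complex.mul_re, Complex.mul_im, Complex.conj_re, Complex.conj_im]
  ring

lemma key_omega (a b c d e : C3) (y₁ y₂ : ℝ) :
  omega3 (y₁ • ((2:ℝ)•cross3 b c) + y₁ • ((2:ℝ)•cross3 a c) + y₂ • ((-2:ℝ)•cross3 a b)
      + (cross3 a e + cross3 b e - cross3 c d))
         (y₂•a + (-y₂)•b + y₁•c + e)
  + omega3 (y₁•a + y₁•b + y₂•c + d)
         (y₂ • ((2:ℝ)•cross3 b c) + (-y₂) • ((2:ℝ)•cross3 a c) + y₁ • ((-2:ℝ)•cross3 a b)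
      + (-cross3 a d + cross3 b d + cross3 c e))
  = 0 := by
  have h2r : ((1/2:ℂ)).re = 1/2 := by norm_num
  have h2i : ((1/2:ℂ)).im = 0 := by norm_num
  simp [omega3, cross3, h2r, h2i, Complex.add_re, Complex.add_im, Complex.sub_re,
    Complex.sub_im, Complex.neg_re, Complex.neg_im, Complex.mul_re, Complex.mul_im,
    Complex.conj_re, Complex.conj_im, Complex.smul_re, Complex.smul_im,
    Prod.fst_add, Prod.snd_add, Prod.smul_fst, Prod.smul_snd, Prod.fst_sub, Prod.snd_sub,
    Prod.fst_neg, Prod.snd_neg, smul_smul]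
  ring

lemma omegaEq (a b c d e : C3) (y₁ y₂ : ℝ) :
  omega3 (y₁•a + y₁•b + y₂•c + d) (y₂•a + (-y₂)•b + y₁•c + e)
  = (-2*y₁*y₂) * omega3 a b + (y₁^2-y₂^2) * omega3 a c + (y₁^2+y₂^2) * omega3 b c
    + y₁ * (omega3 a e + omega3 b e - omega3 c d)
    + y₂ * (-omega3 a d + omega3 b d + omega3 c e) + omega3 d e := by
  simp [omega3, Complex.add_re, Complex.add_im, Complex.mul_re, Complex.mul_im,
    Complex.conj_re, Complex.conj_im, Complex.smul_re, Complex.smul_im,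
    Prod.fst_add, Prod.snd_add, Prod.smul_fst, Prod.smul_snd, Complex.neg_re, Complex.neg_im]
  ring

lemma crossEq (a b c d e : C3) (y₁ y₂ : ℝ) :
  cross3 (y₁•a + y₁•b + y₂•c + d) (y₂•a + (-y₂)•b + y₁•c + e)
  = ((1/2:ℝ)*(y₁^2+y₂^2)) • ((2:ℝ)•cross3 b c) + ((1/2:ℝ)*(y₁^2-y₂^2)) • ((2:ℝ)•cross3 a c)
    + (y₁*y₂) • ((-2:ℝ)•cross3 a b) + y₁ • (cross3 a e + cross3 b e - cross3 c d)
    + y₂ • (-cross3 a d + cross3 b d + cross3 c e) + cross3 d e := by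
  refine Prod.ext ?_ (Prod.ext ?_ ?_) <;>
  · simp [cross3, Prod.fst_add, Prod.snd_add, Prod.smul_fst, Prod.smul_snd,
      Prod.fst_sub, Prod.snd_sub, Prod.fst_neg, Prod.snd_neg,
      Complex.real_smul, map_add, map_sub, map_mul, map_neg, Complex.conj_ofReal,
      Complex.ofReal_mul, Complex.ofReal_add, Complex.ofReal_sub, Complex.ofReal_pow,
      Complex.ofReal_neg, Complex.ofReal_div, Complex.ofReal_one, Complex.ofReal_ofNat]
    ring

/- ### Calculus lemmas -/

lemma hasDerivAt_pair {f g : ℝ → ℂ} {f' g' : ℂ} {t : ℝ}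
    (hf : HasDerivAt f f' t) (hg : HasDerivAt g g' t) :
    HasDerivAt (fun s => (conj (f s) * g s).im)
      ((conj f' * g t).im + (conj (f t) * g').im) t := by
  have hfr := Complex.reCLM.hasFDerivAt.comp_hasDerivAt t hf
  have hfi := Complex.imCLM.hasFDerivAt.comp_hasDerivAt t hf
  have hgr := Complex.reCLM.hasFDerivAt.comp_hasDerivAt t hg
  have hgi := Complex.imCLM.hasFDerivAt.comp_hasDerivAt t hg
  have h := (hfr.mul hgi).sub (hfi.mul hgr)
  have e1 : (fun s => (conj (f s) * g s).im)
      = fun s => (f s).re * (g s).im - (f s).im * (g s).re := by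
    funext s
    simp [Complex.mul_im, Complex.conj_re, Complex.conj_im]
    ring
  rw [e1]
  refine h.congr_deriv ?_
  simp [Complex.mul_im, Complex.conj_re, Complex.conj_im]
  ring

lemma hasDerivAt_omega3 {u v : ℝ → C3} {u' v' : C3} {t : ℝ}
    (hu : HasDerivAt u u' t) (hv : HasDerivAt v v' t) :
    HasDerivAt (fun s => omega3 (u s) (v s)) (omega3 u' (v t) + omega3 (u t) v') t := by
  have h := ((hasDerivAt_pair hu.fst hv.fst).add
      (hasDerivAt_pair hu.snd.fst hv.snd.fst)).add
      (hasDerivAt_pair hu.snd.snd hv.snd.snd)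
  refine h.congr_deriv ?_
  simp [omega3]
  ring

theorem statement_1
    (z₁ z₂ z₃ z₄ z₅ z₆ : ℝ → C3)
    (hc1 : omega3 (z₂ 0) (z₃ 0) = 0)
    (hc2 : omega3 (z₁ 0) (z₃ 0) = 0)
    (hc3 : omega3 (z₁ 0) (z₂ 0) = 0)
    (hc4 : omega3 (z₁ 0) (z₅ 0) + omega3 (z₂ 0) (z₅ 0) - omega3 (z₃ 0) (z₄ 0) = 0)
    (hc5 : -omega3 (z₁ 0) (z₄ 0) + omega3 (z₂ 0) (z₄ 0) + omega3 (z₃ 0) (z₅ 0) = 0)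
    (hc6 : omega3 (z₄ 0) (z₅ 0) = 0)
    (hz1 : ∀ t : ℝ, HasDerivAt z₁ ((2:ℝ) • cross3 (z₂ t) (z₃ t)) t)
    (hz2 : ∀ t : ℝ, HasDerivAt z₂ ((2:ℝ) • cross3 (z₁ t) (z₃ t)) t)
    (hz3 : ∀ t : ℝ, HasDerivAt z₃ ((-2:ℝ) • cross3 (z₁ t) (z₂ t)) t)
    (hz4 : ∀ t : ℝ, HasDerivAt z₄
      (cross3 (z₁ t) (z₅ t) + cross3 (z₂ t) (z₅ t) - cross3 (z₃ t) (z₄ t)) t)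
    (hz5 : ∀ t : ℝ, HasDerivAt z₅
      (-cross3 (z₁ t) (z₄ t) + cross3 (z₂ t) (z₄ t) + cross3 (z₃ t) (z₅ t)) t)
    (hz6 : ∀ t : ℝ, HasDerivAt z₆ (cross3 (z₄ t) (z₅ t)) t) :
    ∀ y₁ y₂ t : ℝ,
      omega3 (deriv (fun s => PhiMap z₁ z₂ z₃ z₄ z₅ z₆ s y₂ t) y₁)
             (deriv (fun s => PhiMap z₁ z₂ z₃ z₄ z₅ z₆ y₁ s t) y₂) = 0 ∧
      omega3 (deriv (fun s => PhiMap z₁ z₂ z₃ z₄ z₅ z₆ s y₂ t) y₁)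
             (deriv (fun s => PhiMap z₁ z₂ z₃ z₄ z₅ z₆ y₁ y₂ s) t) = 0 ∧
      omega3 (deriv (fun s => PhiMap z₁ z₂ z₃ z₄ z₅ z₆ y₁ s t) y₂)
             (deriv (fun s => PhiMap z₁ z₂ z₃ z₄ z₅ z₆ y₁ y₂ s) t) = 0 ∧
      cross3 (deriv (fun s => PhiMap z₁ z₂ z₃ z₄ z₅ z₆ s y₂ t) y₁)
             (deriv (fun s => PhiMap z₁ z₂ z₃ z₄ z₅ z₆ y₁ s t) y₂)
        = deriv (fun s => PhiMap z₁ z₂ z₃ z₄ z₅ z₆ y₁ y₂ s) t := by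
  intro y₁ y₂ t
  -- the y₁-partial derivative
  have hUy : HasDerivAt (fun s => PhiMap z₁ z₂ z₃ z₄ z₅ z₆ s y₂ t)
      (y₁ • z₁ t + y₁ • z₂ t + y₂ • z₃ t + z₄ t) y₁ := by
    have hA : HasDerivAt (fun s : ℝ => (1/2:ℝ)*(s^2+y₂^2)) y₁ y₁ := by
      have h := ((hasDerivAt_pow 2 y₁).add_const (y₂^2)).const_mul (1/2:ℝ)
      refine h.congr_deriv ?_; push_cast; ring
    have hB : HasDerivAt (fun s : ℝ => (1/2:ℝ)*(s^2-y₂^2)) y₁ y₁ := by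
      have h := ((hasDerivAt_pow 2 y₁).sub_const (y₂^2)).const_mul (1/2:ℝ)
      refine h.congr_deriv ?_; push_cast; ring
    have hC : HasDerivAt (fun s : ℝ => s*y₂) y₂ y₁ := by
      simpa using (hasDerivAt_id y₁).mul_const y₂
    have h := (((((hA.smul_const (z₁ t)).add (hB.smul_const (z₂ t))).add
        (hC.smul_const (z₃ t))).add ((hasDerivAt_id y₁).smul_const (z₄ t))).add_const
        (y₂ • z₅ t)).add_const (z₆ t)
    refine h.congr_deriv ?_
    module
  -- the y₂-partial derivative
  have hVy : HasDerivAt (fun s => PhiMap z₁ z₂ z₃ z₄ z₅ z₆ y₁ s t)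
      (y₂ • z₁ t + (-y₂) • z₂ t + y₁ • z₃ t + z₅ t) y₂ := by
    have hA : HasDerivAt (fun s : ℝ => (1/2:ℝ)*(y₁^2+s^2)) y₂ y₂ := by
      have h := ((hasDerivAt_pow 2 y₂).const_add (y₁^2)).const_mul (1/2:ℝ)
      refine h.congr_deriv ?_; push_cast; ring
    have hB : HasDerivAt (fun s : ℝ => (1/2:ℝ)*(y₁^2-s^2)) (-y₂) y₂ := by
      have h := (((hasDerivAt_pow 2 y₂).const_sub (y₁^2))).const_mul (1/2:ℝ)
      refine h.congr_deriv ?_; push_cast; ring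
    have hC : HasDerivAt (fun s : ℝ => y₁*s) y₁ y₂ := by
      simpa using (hasDerivAt_id y₂).const_mul y₁
    have h := ((((((hA.smul_const (z₁ t)).add (hB.smul_const (z₂ t))).add
        (hC.smul_const (z₃ t))).add (hasDerivAt_const y₂ (y₁ • z₄ t))).add
        ((hasDerivAt_id y₂).smul_const (z₅ t))).add_const (z₆ t))
    refine h.congr_deriv ?_
    module
  -- the t-partial derivative
  have hT : HasDerivAt (fun s => PhiMap z₁ z₂ z₃ z₄ z₅ z₆ y₁ y₂ s)
      (((1/2:ℝ)*(y₁^2+y₂^2)) • ((2:ℝ)•cross3 (z₂ t) (z₃ t))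
        + ((1/2:ℝ)*(y₁^2-y₂^2)) • ((2:ℝ)•cross3 (z₁ t) (z₃ t))
        + (y₁*y₂) • ((-2:ℝ)•cross3 (z₁ t) (z₂ t))
        + y₁ • (cross3 (z₁ t) (z₅ t) + cross3 (z₂ t) (z₅ t) - cross3 (z₃ t) (z₄ t))
        + y₂ • (-cross3 (z₁ t) (z₄ t) + cross3 (z₂ t) (z₄ t) + cross3 (z₃ t) (z₅ t))
        + cross3 (z₄ t) (z₅ t)) t := by
    exact ((((((hz1 t).const_smul ((1/2:ℝ)*(y₁^2+y₂^2))).add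
      ((hz2 t).const_smul ((1/2:ℝ)*(y₁^2-y₂^2)))).add
      ((hz3 t).const_smul (y₁*y₂))).add
      ((hz4 t).const_smul y₁)).add
      ((hz5 t).const_smul y₂)).add (hz6 t)
  rw [hUy.deriv, hVy.deriv, hT.deriv]
  -- the conserved quantity ω(Φ_{y₁}, Φ_{y₂})
  have hg : ∀ τ : ℝ, HasDerivAt
      (fun τ => omega3 (y₁ • z₁ τ + y₁ • z₂ τ + y₂ • z₃ τ + z₄ τ)
        (y₂ • z₁ τ + (-y₂) • z₂ τ + y₁ • z₃ τ + z₅ τ)) 0 τ := by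
    intro τ
    have hU : HasDerivAt (fun τ => y₁ • z₁ τ + y₁ • z₂ τ + y₂ • z₃ τ + z₄ τ)
        (y₁ • ((2:ℝ)•cross3 (z₂ τ) (z₃ τ)) + y₁ • ((2:ℝ)•cross3 (z₁ τ) (z₃ τ))
          + y₂ • ((-2:ℝ)•cross3 (z₁ τ) (z₂ τ))
          + (cross3 (z₁ τ) (z₅ τ) + cross3 (z₂ τ) (z₅ τ) - cross3 (z₃ τ) (z₄ τ))) τ :=
      ((((hz1 τ).const_smul y₁).add ((hz2 τ).const_smul y₁)).add
        ((hz3 τ).const_smul y₂)).add (hz4 τ)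
    have hV : HasDerivAt (fun τ => y₂ • z₁ τ + (-y₂) • z₂ τ + y₁ • z₃ τ + z₅ τ)
        (y₂ • ((2:ℝ)•cross3 (z₂ τ) (z₃ τ)) + (-y₂) • ((2:ℝ)•cross3 (z₁ τ) (z₃ τ))
          + y₁ • ((-2:ℝ)•cross3 (z₁ τ) (z₂ τ))
          + (-cross3 (z₁ τ) (z₄ τ) + cross3 (z₂ τ) (z₄ τ) + cross3 (z₃ τ) (z₅ τ))) τ :=
      ((((hz1 τ).const_smul y₂).add ((hz2 τ).const_smul (-y₂))).add
        ((hz3 τ).const_smul y₁)).add (hz5 τ)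
    have h := hasDerivAt_omega3 hU hV
    rw [← key_omega (z₁ τ) (z₂ τ) (z₃ τ) (z₄ τ) (z₅ τ) y₁ y₂]
    exact h
  have hconst : omega3 (y₁ • z₁ t + y₁ • z₂ t + y₂ • z₃ t + z₄ t)
      (y₂ • z₁ t + (-y₂) • z₂ t + y₁ • z₃ t + z₅ t)
      = omega3 (y₁ • z₁ 0 + y₁ • z₂ 0 + y₂ • z₃ 0 + z₄ 0)
      (y₂ • z₁ 0 + (-y₂) • z₂ 0 + y₁ • z₃ 0 + z₅ 0) :=
    is_const_of_deriv_eq_zero (fun τ => (hg τ).differentiableAt)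
      (fun τ => (hg τ).deriv) t 0
  have hzero : omega3 (y₁ • z₁ t + y₁ • z₂ t + y₂ • z₃ t + z₄ t)
      (y₂ • z₁ t + (-y₂) • z₂ t + y₁ • z₃ t + z₅ t) = 0 := by
    rw [hconst, omegaEq, hc1, hc2, hc3, hc4, hc5, hc6]
    ring
  have hcr := crossEq (z₁ t) (z₂ t) (z₃ t) (z₄ t) (z₅ t) y₁ y₂
  refine ⟨hzero, ?_, ?_, hcr⟩
  · rw [← hcr]; exact omega3_cross_self_left _ _
  · rw [← hcr]; exact omega3_cross_self_right _ _
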